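/- arXiv:2006.08163 — 3 statements merged into one kernel-verified Lean document; each statement's English description precedes it below -/
import Mathlib

section
/- For all real numbers a, the integral over the real line of log(1 + a^2/x^2) dx equals 2π|a|. -/
open MeasureTheory Real Set Filter Topology

private lemma aux_log_integral {b : ℝ} (hb : 0 < b) :
    ∫ x in Ioi (0:ℝ), Real.log (1 + b ^ 2 / x ^ 2) = Real.pi * b := by
  -- main computation on Ioi 0
  set F : ℝ → ℝ := fun x => x * Real.log (1 + b ^ 2 / x ^ 2) + 2 * b * Real.arctan (x / b)
    with hF
  have hb0 : b ≠ 0 := ne_of_gt hb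
  have hderiv : ∀ x ∈ Ioi (0:ℝ), HasDerivAt F (Real.log (1 + b ^ 2 / x ^ 2)) x := by
    intro x hx
    have hx0 : x ≠ 0 := ne_of_gt hx
    have hpos : 0 < 1 + b ^ 2 / x ^ 2 := by positivity
    have h1 : HasDerivAt (fun y : ℝ => 1 + b ^ 2 / y ^ 2)
        ((0 * x ^ 2 - b ^ 2 * ((2:ℕ) * x ^ (2 - 1))) / (x ^ 2) ^ 2) x := by
      exact ((hasDerivAt_const x (b ^ 2)).div (hasDerivAt_pow 2 x)
        (pow_ne_zero 2 hx0)).const_add 1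
    have hlog := h1.log (ne_of_gt hpos)
    have hmul := (hasDerivAt_id x).mul hlog
    have harct := (((hasDerivAt_id x).div_const b).arctan).const_mul (2 * b)
    have H := hmul.add harct
    have hxb : x ^ 2 + b ^ 2 ≠ 0 := by positivity
    refine (H : HasDerivAt F _ x).congr_deriv ?_
    have h1b : (1:ℝ) + (x / b) ^ 2 = (b ^ 2 + x ^ 2) / b ^ 2 := by field_simp
    simp only [id]
    field_simp
    ring
  have harctcont : Continuous fun x : ℝ => 2 * b * Real.arctan (x / b) :=
    continuous_const.mul (Real.continuous_arctan.comp (continuous_id.div_const b))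
  have hcont : ContinuousWithinAt F (Ici (0:ℝ)) 0 := by
    have hF0 : F 0 = 0 := by simp [hF]
    rw [← continuousWithinAt_Ioi_iff_Ici]
    unfold ContinuousWithinAt
    rw [hF0]
    have hlim1 : Tendsto (fun x : ℝ => x * Real.log (1 + b ^ 2 / x ^ 2)) (𝓝[>] 0) (𝓝 0) := by
      have heq : ∀ x ∈ Ioi (0:ℝ), x * Real.log (x ^ 2 + b ^ 2) - 2 * (Real.log x * x)
          = x * Real.log (1 + b ^ 2 / x ^ 2) := by
        intro x hx
        have hx0 : x ≠ 0 := ne_of_gt hx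
        have h1 : (1 : ℝ) + b ^ 2 / x ^ 2 = (x ^ 2 + b ^ 2) / x ^ 2 := by field_simp
        rw [h1, Real.log_div (by positivity) (pow_ne_zero 2 hx0), Real.log_pow]
        push_cast
        ring
      have t1 : Tendsto (fun x : ℝ => x * Real.log (x ^ 2 + b ^ 2)) (𝓝[>] 0) (𝓝 0) := by
        have hc : ContinuousAt (fun x : ℝ => x * Real.log (x ^ 2 + b ^ 2)) 0 := by
          exact continuousAt_id.mul ((Real.continuousAt_log (by positivity)).comp (by fun_prop))
        simpa using hc.tendsto.mono_left nhdsWithin_le_nhds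
      have t2 : Tendsto (fun x : ℝ => Real.log x * x) (𝓝[>] 0) (𝓝 0) := by
        have := tendsto_log_mul_rpow_nhdsGT_zero (r := 1) one_pos
        simpa using this
      have h3 := t1.sub (t2.const_mul 2)
      simp only [sub_zero, mul_zero] at h3
      refine h3.congr' ?_
      filter_upwards [self_mem_nhdsWithin] with x hx using heq x hx
    have hlim2 : Tendsto (fun x : ℝ => 2 * b * Real.arctan (x / b)) (𝓝[>] 0) (𝓝 0) := by
      simpa using (harctcont.tendsto 0).mono_left (nhdsWithin_le_nhds (s := Ioi (0:ℝ)))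
    simpa using hlim1.add hlim2
  have hnonneg : ∀ x ∈ Ioi (0:ℝ), 0 ≤ Real.log (1 + b ^ 2 / x ^ 2) := by
    intro x hx
    apply Real.log_nonneg
    have : 0 ≤ b ^ 2 / x ^ 2 := by positivity
    linarith
  have htop : Tendsto F atTop (𝓝 (Real.pi * b)) := by
    have t1 : Tendsto (fun x : ℝ => x * Real.log (1 + b ^ 2 / x ^ 2)) atTop (𝓝 0) := by
      apply squeeze_zero' (g := fun x : ℝ => b ^ 2 / x)
      · filter_upwards [eventually_gt_atTop (0:ℝ)] with x hx
        have : 0 ≤ b ^ 2 / x ^ 2 := by positivity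
        exact mul_nonneg hx.le (Real.log_nonneg (by linarith))
      · filter_upwards [eventually_gt_atTop (0:ℝ)] with x hx
        have hx0 : x ≠ 0 := ne_of_gt hx
        have hle : Real.log (1 + b ^ 2 / x ^ 2) ≤ b ^ 2 / x ^ 2 := by
          have := Real.log_le_sub_one_of_pos (x := 1 + b ^ 2 / x ^ 2) (by positivity)
          linarith
        calc x * Real.log (1 + b ^ 2 / x ^ 2) ≤ x * (b ^ 2 / x ^ 2) :=
              mul_le_mul_of_nonneg_left hle hx.le
          _ = b ^ 2 / x := by field_simp
      · exact Tendsto.div_atTop tendsto_const_nhds tendsto_id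
    have t2 : Tendsto (fun x : ℝ => 2 * b * Real.arctan (x / b)) atTop (𝓝 (2 * b * (π / 2))) := by
      have hdiv : Tendsto (fun x : ℝ => x / b) atTop atTop := tendsto_id.atTop_div_const hb
      exact ((Real.tendsto_arctan_atTop.mono_right nhdsWithin_le_nhds).comp hdiv).const_mul (2 * b)
    have := t1.add t2
    rw [zero_add] at this
    convert this using 2
    ring
  rw [integral_Ioi_of_hasDerivAt_of_nonneg hcont hderiv hnonneg htop]
  simp [hF]

/-- For all real numbers `a`, the integral over the real line of
`log (1 + a² / x²)` equals `2 π |a|`. -/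
theorem integral_log_one_add_sq_div_sq (a : ℝ) :
    ∫ x : ℝ, Real.log (1 + a ^ 2 / x ^ 2) = 2 * Real.pi * |a| := by
  rcases eq_or_ne a 0 with rfl | ha0
  · simp
  have ha : 0 < |a| := abs_pos.mpr ha0
  have hev : ∫ x : ℝ, Real.log (1 + a ^ 2 / x ^ 2)
      = 2 * ∫ x in Ioi (0:ℝ), Real.log (1 + |a| ^ 2 / x ^ 2) := by
    rw [← integral_comp_abs (f := fun x => Real.log (1 + |a| ^ 2 / x ^ 2))]
    refine integral_congr_ae (Eventually.of_forall fun x => ?_)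
    simp [sq_abs]
  rw [hev, aux_log_integral ha]
  ring
end

section
/- For all real numbers a and b, the integral over the real line of log((x^2 + a^2)/(x^2 + b^2)) dx equals 2π(|a| - |b|). -/
open MeasureTheory Real Set Filter Topology

private lemma contOn_mul_log : ContinuousOn (fun x : ℝ => x * Real.log x) (Set.Ici 0) := by
  intro x hx
  rcases eq_or_lt_of_le (Set.mem_Ici.mp hx) with h | h
  · subst h
    rw [← continuousWithinAt_Ioi_iff_Ici]
    have h0 : Tendsto (fun x : ℝ => x * Real.log x) (𝓝[>] 0) (𝓝 0) := by
      have := tendsto_log_mul_rpow_nhdsGT_zero (one_pos)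
      refine this.congr' ?_ |>.congr (fun x => rfl)
      filter_upwards [self_mem_nhdsWithin] with y hy
      rw [Real.rpow_one, mul_comm]
    simpa [ContinuousWithinAt] using h0
  · exact ((continuous_id.continuousAt).mul (Real.continuousAt_log h.ne')).continuousWithinAt

/-- antiderivative building block -/
private noncomputable def G (c : ℝ) (x : ℝ) : ℝ :=
  x * Real.log (x ^ 2 + c ^ 2) + 2 * c * Real.arctan (x / c)

private lemma G_deriv (c : ℝ) {x : ℝ} (hx : x ≠ 0) :
    HasDerivAt (G c) (Real.log (x ^ 2 + c ^ 2) + 2) x := by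
  rcases eq_or_ne c 0 with rfl | hc
  · have hGeq : G 0 = fun x : ℝ => x * Real.log (x ^ 2) := by
      funext y; simp [G]
    rw [hGeq]
    have hpow : HasDerivAt (fun x : ℝ => x ^ 2) (2 * x) x := by
      simpa using (hasDerivAt_pow 2 x)
    have hlog : HasDerivAt (fun x : ℝ => Real.log (x ^ 2))
        ((2 * x) / x ^ 2) x := hpow.log (pow_ne_zero 2 hx)
    have h1 : HasDerivAt (fun y : ℝ => y * Real.log (y ^ 2)) (1 * Real.log (x ^ 2) + x * ((2 * x) / x ^ 2)) x := (hasDerivAt_id x).fun_mul hlog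
    convert h1 using 1
    have h2 : x ^ 2 ≠ 0 := pow_ne_zero 2 hx
    field_simp
    ring
  · have hden : x ^ 2 + c ^ 2 ≠ 0 := by positivity
    have hpow : HasDerivAt (fun x : ℝ => x ^ 2 + c ^ 2) (2 * x) x := by
      simpa using ((hasDerivAt_pow 2 x).add_const (c ^ 2 : ℝ))
    have hlog : HasDerivAt (fun x : ℝ => Real.log (x ^ 2 + c ^ 2))
        ((2 * x) / (x ^ 2 + c ^ 2)) x := hpow.log hden
    have h1 : HasDerivAt (fun x : ℝ => x * Real.log (x ^ 2 + c ^ 2))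
        (Real.log (x ^ 2 + c ^ 2) + x * ((2 * x) / (x ^ 2 + c ^ 2))) x := by
      simpa using (hasDerivAt_id x).fun_mul hlog
    have hdiv : HasDerivAt (fun x : ℝ => x / c) (1 / c) x := (hasDerivAt_id x).div_const c
    have harct : HasDerivAt (fun x : ℝ => Real.arctan (x / c))
        ((1 / (1 + (x / c) ^ 2)) * (1 / c)) x := by
      have := (Real.hasDerivAt_arctan (x / c)).comp x hdiv; exact this
    have h2 : HasDerivAt (fun x : ℝ => 2 * c * Real.arctan (x / c))
        (2 * c * ((1 / (1 + (x / c) ^ 2)) * (1 / c))) x := harct.const_mul _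
    have : HasDerivAt (G c) (Real.log (x ^ 2 + c ^ 2) + x * ((2 * x) / (x ^ 2 + c ^ 2)) + 2 * c * ((1 / (1 + (x / c) ^ 2)) * (1 / c))) x := h1.add h2
    convert this using 1
    have h1c : (1 : ℝ) + (x / c) ^ 2 ≠ 0 := by positivity
    field_simp
    ring

private lemma G_cont (c : ℝ) : ContinuousWithinAt (G c) (Set.Ici 0) 0 := by
  rcases eq_or_ne c 0 with rfl | hc
  · have h1 : ContinuousWithinAt (fun x : ℝ => 2 * (x * Real.log x)) (Set.Ici 0) 0 :=
      ((contOn_mul_log 0 Set.self_mem_Ici).const_smul (2:ℝ) : _)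
    have h2 : ContinuousWithinAt (G 0) (Set.Ici 0) 0 := by
      refine h1.congr (fun x hx => ?_) ?_
      · simp only [G]
        rcases eq_or_lt_of_le (Set.mem_Ici.mp hx) with h | h
        · subst h; simp
        · have : x ^ 2 + (0:ℝ) ^ 2 = x ^ 2 := by ring
          rw [this, Real.log_pow]
          push_cast
          simp
          ring
      · simp [G]
    exact h2
  · have : Continuous (G c) := by
      have hden : ∀ x : ℝ, x ^ 2 + c ^ 2 ≠ 0 := fun x => by positivity
      exact (continuous_id.mul ((Real.continuousOn_log.comp_continuous
        (by continuity) (fun x => hden x)))).add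
        (continuous_const.mul (Real.continuous_arctan.comp (continuous_id.div_const c)))
    exact this.continuousWithinAt

private lemma tendsto_x_log_one_add (c : ℝ) :
    Tendsto (fun x : ℝ => x * Real.log (1 + c / x ^ 2)) atTop (𝓝 0) := by
  have h1 : Tendsto (fun y : ℝ => y * Real.log (1 + c / y)) atTop (𝓝 c) :=
    Real.tendsto_mul_log_one_add_div_atTop c
  have hsq : Tendsto (fun x : ℝ => x ^ 2) atTop atTop :=
    tendsto_pow_atTop (two_ne_zero)
  have h2 : Tendsto (fun x : ℝ => x ^ 2 * Real.log (1 + c / x ^ 2)) atTop (𝓝 c) :=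
    h1.comp hsq
  have h3 : Tendsto (fun x : ℝ => x⁻¹ * (x ^ 2 * Real.log (1 + c / x ^ 2))) atTop
      (𝓝 (0 * c)) := tendsto_inv_atTop_zero.mul h2
  rw [zero_mul] at h3
  refine h3.congr' ?_
  filter_upwards [eventually_gt_atTop (0:ℝ)] with x hx
  field_simp

private lemma tendsto_x_log_sub (a b : ℝ) :
    Tendsto (fun x : ℝ => x * Real.log (x ^ 2 + a ^ 2) - x * Real.log (x ^ 2 + b ^ 2))
      atTop (𝓝 0) := by
  have h := (tendsto_x_log_one_add (a ^ 2)).sub (tendsto_x_log_one_add (b ^ 2))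
  rw [sub_zero] at h
  refine h.congr' ?_
  filter_upwards [eventually_gt_atTop (0:ℝ)] with x hx
  have hx2 : (0:ℝ) < x ^ 2 := by positivity
  have key : ∀ c : ℝ, Real.log (x ^ 2 + c ^ 2) = Real.log (x ^ 2) +
      Real.log (1 + c ^ 2 / x ^ 2) := by
    intro c
    rw [← Real.log_mul hx2.ne' (by positivity)]
    congr 1
    field_simp
  rw [key a, key b]
  ring

private lemma tendsto_arctan_part {c : ℝ} (hc : 0 ≤ c) :
    Tendsto (fun x : ℝ => 2 * c * Real.arctan (x / c)) atTop (𝓝 (Real.pi * c)) := by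
  rcases eq_or_lt_of_le hc with rfl | hc
  · simpa using tendsto_const_nhds (x := (0:ℝ)) (f := atTop)
  · have h1 : Tendsto (fun x : ℝ => x / c) atTop atTop := tendsto_id.atTop_div_const hc
    have h2 : Tendsto (fun x : ℝ => Real.arctan (x / c)) atTop (𝓝 (Real.pi / 2)) :=
      (Real.tendsto_arctan_atTop.mono_right nhdsWithin_le_nhds).comp h1
    have := h2.const_mul (2 * c)
    convert this using 2
    ring

private lemma log_sub_log_le {u v : ℝ} (hu : 0 < u) (hv : 0 < v) :
    Real.log u - Real.log v ≤ (u - v) / v := by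
  rw [← Real.log_div hu.ne' hv.ne']
  have h := Real.log_le_sub_one_of_pos (div_pos hu hv)
  have : u / v - 1 = (u - v) / v := by field_simp
  linarith [this ▸ h]

private lemma integrableOn_log_quad (c : ℝ) :
    IntegrableOn (fun x : ℝ => Real.log (x ^ 2 + c ^ 2)) (Set.Ioc 0 1) := by
  rcases eq_or_ne c 0 with rfl | hc
  · -- log (x^2) on (0,1]; use antiderivative of -log x²  :  2(x - x log x)
    have hcont : ContinuousOn (fun x : ℝ => 2 * (x - x * Real.log x)) (Set.Icc 0 1) := by
      refine (continuousOn_id.sub (contOn_mul_log.mono Set.Icc_subset_Ici_self)).const_smul (2:ℝ)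
    have hderiv : ∀ x ∈ Set.Ioo (0:ℝ) 1,
        HasDerivAt (fun x : ℝ => 2 * (x - x * Real.log x)) (-Real.log (x ^ 2 + 0 ^ 2)) x := by
      intro x hx
      have hlog : HasDerivAt Real.log x⁻¹ x := Real.hasDerivAt_log hx.1.ne'
      have h1 : HasDerivAt (fun x : ℝ => x * Real.log x) (Real.log x + x * x⁻¹) x := by
        simpa using (hasDerivAt_id x).fun_mul hlog
      have h2 : HasDerivAt (fun x : ℝ => 2 * (x - x * Real.log x)) (2 * (1 - (Real.log x + x * x⁻¹))) x := ((hasDerivAt_id x).sub h1).const_mul (2:ℝ)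
      convert h2 using 1
      rw [mul_inv_cancel₀ hx.1.ne']
      have h3 : x ^ 2 + (0:ℝ) ^ 2 = x ^ 2 := by ring
      rw [h3, Real.log_pow]
      push_cast
      ring
    have hpos : ∀ x ∈ Set.Ioo (0:ℝ) 1, 0 ≤ -Real.log (x ^ 2 + 0 ^ 2) := by
      intro x hx
      have h3 : x ^ 2 + (0:ℝ) ^ 2 = x ^ 2 := by ring
      have h4 : Real.log (x ^ 2 + 0 ^ 2) ≤ 0 := by
        rw [h3]
        exact Real.log_nonpos (by positivity) (by nlinarith [hx.1, hx.2])
      linarith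
    have := intervalIntegral.integrableOn_deriv_of_nonneg hcont hderiv hpos
    exact IntegrableOn.congr_fun this.neg (fun x _ => by simp) measurableSet_Ioc
  · have hc2 : 0 < c ^ 2 := (sq_nonneg c).lt_of_ne (Ne.symm (pow_ne_zero 2 hc))
    have hcont : Continuous (fun x : ℝ => Real.log (x ^ 2 + c ^ 2)) := by
      refine Real.continuousOn_log.comp_continuous (by continuity) (fun x => ?_)
      have := sq_nonneg x
      intro h
      have h' : x ^ 2 + c ^ 2 = 0 := h
      nlinarith
    exact (hcont.continuousOn.integrableOn_Icc).mono_set Set.Ioc_subset_Icc_self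

private lemma integrableOn_g (a b : ℝ) :
    IntegrableOn (fun x : ℝ => Real.log (x ^ 2 + a ^ 2) - Real.log (x ^ 2 + b ^ 2))
      (Set.Ioi 0) := by
  have hmeas : AEStronglyMeasurable
      (fun x : ℝ => Real.log (x ^ 2 + a ^ 2) - Real.log (x ^ 2 + b ^ 2))
      (volume.restrict (Set.Ioi (1:ℝ))) := by
    refine ((Real.measurable_log.comp ((measurable_id.pow_const 2).add_const _)).sub
      (Real.measurable_log.comp ((measurable_id.pow_const 2).add_const _))).aestronglyMeasurable
  have hIoi1 : IntegrableOn
      (fun x : ℝ => Real.log (x ^ 2 + a ^ 2) - Real.log (x ^ 2 + b ^ 2)) (Set.Ioi 1) := by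
    have hint : IntegrableOn (fun x : ℝ => (a ^ 2 + b ^ 2) * x ^ (-2 : ℝ)) (Set.Ioi 1) :=
      (integrableOn_Ioi_rpow_of_lt (by norm_num) one_pos).const_mul _
    refine hint.integrable.mono hmeas ?_
    filter_upwards [ae_restrict_mem measurableSet_Ioi] with x hx
    have hx1 : (1:ℝ) < x := hx
    have hx0 : (0:ℝ) < x := by linarith
    have hx2 : (0:ℝ) < x ^ 2 := by positivity
    have hua : (0:ℝ) < x ^ 2 + a ^ 2 := by positivity
    have hub : (0:ℝ) < x ^ 2 + b ^ 2 := by positivity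
    have key : ∀ u v : ℝ, 0 < u → 0 < v → x ^ 2 ≤ v → u - v ≤ a ^ 2 + b ^ 2 →
        Real.log u - Real.log v ≤ (a ^ 2 + b ^ 2) / x ^ 2 := by
      intro u v hu hv hxv huv
      refine (log_sub_log_le hu hv).trans ?_
      rcases le_or_gt (u - v) 0 with h | h
      · have : (u - v) / v ≤ 0 := div_nonpos_of_nonpos_of_nonneg h hv.le
        have : (0:ℝ) ≤ (a ^ 2 + b ^ 2) / x ^ 2 := by positivity
        linarith
      · calc (u - v) / v ≤ (u - v) / x ^ 2 := by gcongr
            _ ≤ (a ^ 2 + b ^ 2) / x ^ 2 := by gcongr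
    have habs : |Real.log (x ^ 2 + a ^ 2) - Real.log (x ^ 2 + b ^ 2)| ≤
        (a ^ 2 + b ^ 2) / x ^ 2 := by
      rw [abs_le]
      constructor
      · have := key (x ^ 2 + b ^ 2) (x ^ 2 + a ^ 2) hub hua (by nlinarith) (by nlinarith)
        linarith
      · exact key (x ^ 2 + a ^ 2) (x ^ 2 + b ^ 2) hua hub (by nlinarith) (by nlinarith)
    calc ‖Real.log (x ^ 2 + a ^ 2) - Real.log (x ^ 2 + b ^ 2)‖
        = |Real.log (x ^ 2 + a ^ 2) - Real.log (x ^ 2 + b ^ 2)| := rfl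
      _ ≤ (a ^ 2 + b ^ 2) / x ^ 2 := habs
      _ ≤ ‖(a ^ 2 + b ^ 2) * x ^ (-2 : ℝ)‖ := by
          rw [Real.norm_eq_abs, Real.rpow_neg hx0.le]
          rw [abs_of_nonneg (by positivity)]
          rw [show ((2:ℝ)) = ((2:ℕ):ℝ) by norm_num, Real.rpow_natCast]
          rw [div_eq_mul_inv]
  have hIoc : IntegrableOn
      (fun x : ℝ => Real.log (x ^ 2 + a ^ 2) - Real.log (x ^ 2 + b ^ 2)) (Set.Ioc 0 1) :=
    (integrableOn_log_quad a).sub (integrableOn_log_quad b)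
  have : Set.Ioi (0:ℝ) = Set.Ioc 0 1 ∪ Set.Ioi 1 := by
    ext x; simp only [Set.mem_Ioi, Set.mem_union, Set.mem_Ioc]
    constructor
    · intro h; rcases le_or_gt x 1 with h1 | h1
      · exact Or.inl ⟨h, h1⟩
      · exact Or.inr h1
    · rintro (⟨h, _⟩ | h); exacts [h, by linarith]
  rw [this]
  exact hIoc.union hIoi1

private lemma integral_Ioi_log_sub {a b : ℝ} (ha : 0 ≤ a) (hb : 0 ≤ b) :
    ∫ x in Set.Ioi (0:ℝ), (Real.log (x ^ 2 + a ^ 2) - Real.log (x ^ 2 + b ^ 2)) =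
      Real.pi * a - Real.pi * b := by
  have hcont : ContinuousWithinAt (fun x => G a x - G b x) (Set.Ici 0) 0 :=
    (G_cont a).sub (G_cont b)
  have hderiv : ∀ x ∈ Set.Ioi (0:ℝ), HasDerivAt (fun x => G a x - G b x)
      (Real.log (x ^ 2 + a ^ 2) - Real.log (x ^ 2 + b ^ 2)) x := by
    intro x hx
    have : HasDerivAt (fun x => G a x - G b x) (Real.log (x ^ 2 + a ^ 2) + 2 - (Real.log (x ^ 2 + b ^ 2) + 2)) x := (G_deriv a (ne_of_gt hx)).sub (G_deriv b (ne_of_gt hx))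
    convert this using 1
    ring
  have htend : Tendsto (fun x => G a x - G b x) atTop
      (𝓝 (Real.pi * a - Real.pi * b)) := by
    have h1 := (tendsto_x_log_sub a b).add (tendsto_arctan_part ha)
    have h2 := h1.sub (tendsto_arctan_part hb)
    rw [zero_add] at h2
    refine h2.congr (fun x => ?_)
    simp only [G]
    ring
  have := integral_Ioi_of_hasDerivAt_of_tendsto hcont hderiv (integrableOn_g a b) htend
  rw [this]
  simp [G]

/-- For all real numbers `a` and `b`, the integral over the real line of
`log ((x² + a²) / (x² + b²))` equals `2 π (|a| - |b|)`. -/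
theorem integral_log_ratio (a b : ℝ) :
    ∫ x : ℝ, Real.log ((x ^ 2 + a ^ 2) / (x ^ 2 + b ^ 2)) = 2 * Real.pi * (|a| - |b|) := by
  have step1 : (∫ x : ℝ, Real.log ((x ^ 2 + a ^ 2) / (x ^ 2 + b ^ 2))) =
      2 * ∫ x in Set.Ioi (0:ℝ), Real.log ((x ^ 2 + a ^ 2) / (x ^ 2 + b ^ 2)) := by
    rw [← integral_comp_abs (f := fun t : ℝ => Real.log ((t ^ 2 + a ^ 2) / (t ^ 2 + b ^ 2)))]
    congr 1
    funext x
    simp [sq_abs]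
  rw [step1]
  have step2 : ∫ x in Set.Ioi (0:ℝ), Real.log ((x ^ 2 + a ^ 2) / (x ^ 2 + b ^ 2)) =
      ∫ x in Set.Ioi (0:ℝ), (Real.log (x ^ 2 + |a| ^ 2) - Real.log (x ^ 2 + |b| ^ 2)) := by
    refine setIntegral_congr_fun measurableSet_Ioi (fun x hx => ?_)
    have hx0 : (0:ℝ) < x := hx
    rw [sq_abs, sq_abs]
    rw [Real.log_div (by positivity) (by positivity)]
  rw [step2, integral_Ioi_log_sub (abs_nonneg a) (abs_nonneg b)]
  ring
end

section
/- Cubic term identity: for φ ∈ 𝒮(ℝ), (1/(6π)) ∂ₓ ∫_ℝ (φ(x) - φ(x+ζ))³/ζ² dζ = (1/2)∂ₓ{φ²|∂ₓ|φ - φ|∂ₓ|φ² + (1/3)|∂ₓ|φ³}. -/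
open MeasureTheory Filter

/-- The truncated principal-value Hilbert transform. -/
noncomputable def hilbertT {E : Type*} [NormedAddCommGroup E] [NormedSpace ℝ E]
    (f : ℝ → E) (x : ℝ) : E :=
  limUnder (nhdsWithin 0 (Set.Ioi (0 : ℝ)))
    (fun ε : ℝ => (Real.pi)⁻¹ • ∫ y in {y : ℝ | ε ≤ |y| ∧ |y| ≤ ε⁻¹}, y⁻¹ • f (x - y))

/-- The operator `|∂ₓ| = H ∂ₓ`, the Fourier multiplier with symbol `|ξ|`. -/
noncomputable def absDeriv (f : ℝ → ℝ) (x : ℝ) : ℝ := hilbertT (deriv f) x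

section Aux

open Set Real intervalIntegral Topology


private lemma lip_of_deriv {f f' : ℝ → ℝ} {M : ℝ}
    (hf : ∀ t, HasDerivAt f (f' t) t) (hM : ∀ t, |f' t| ≤ M) (a b : ℝ) :
    |f a - f b| ≤ M * |a - b| := by
  simpa [Real.norm_eq_abs] using
    Convex.norm_image_sub_le_of_norm_hasDerivWithin_le (f := f) (f' := f') (s := univ)
      (fun t _ => (hf t).hasDerivWithinAt) (fun t _ => hM t) convex_univ (mem_univ b) (mem_univ a)

private lemma sd_deriv {f f' : ℝ → ℝ} (hf : ∀ t, HasDerivAt f (f' t) t) (x : ℝ) (y : ℝ) :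
    HasDerivAt (fun y => 2 * f x - f (x - y) - f (x + y)) (f' (x - y) - f' (x + y)) y := by
  have h1 : HasDerivAt (fun y : ℝ => f (x - y)) (-f' (x - y)) y := by
    simpa [Function.comp_def] using (hf (x - y)).comp y ((hasDerivAt_id y).const_sub x)
  have h2 : HasDerivAt (fun y : ℝ => f (x + y)) (f' (x + y)) y := by
    simpa [Function.comp_def] using (hf (x + y)).comp y ((hasDerivAt_id y).const_add x)
  have := ((hasDerivAt_const y (2 * f x)).sub h1).sub h2
  simpa [Pi.sub_def] using this

private lemma sd_bound {f f' f'' : ℝ → ℝ} {M2 : ℝ}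
    (hf1 : ∀ t, HasDerivAt f (f' t) t) (hf2 : ∀ t, HasDerivAt f' (f'' t) t)
    (hM2 : ∀ t, |f'' t| ≤ M2) (x y : ℝ) (hy : 0 ≤ y) :
    |2 * f x - f (x - y) - f (x + y)| ≤ 2 * M2 * y ^ 2 := by
  have hM2nn : 0 ≤ M2 := (abs_nonneg _).trans (hM2 0)
  have hlip : ∀ a b, |f' a - f' b| ≤ M2 * |a - b| := lip_of_deriv hf2 hM2
  set G : ℝ → ℝ := fun t => 2 * f x - f (x - t) - f (x + t) with hGdef
  have hG0 : G 0 = 0 := by simp [hGdef]; ring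
  have key := Convex.norm_image_sub_le_of_norm_hasDerivWithin_le
    (f := G) (f' := fun t => f' (x - t) - f' (x + t)) (s := Icc 0 y) (C := 2 * M2 * y)
    (fun t _ => (sd_deriv hf1 x t).hasDerivWithinAt)
    (fun t ht => ?_) (convex_Icc 0 y) (left_mem_Icc.2 hy) (right_mem_Icc.2 hy)
  · show |G y| ≤ 2 * M2 * y ^ 2
    rw [hG0, sub_zero, Real.norm_eq_abs, Real.norm_eq_abs, sub_zero, abs_of_nonneg hy] at key
    calc |G y| ≤ 2 * M2 * y * y := key
    _ = 2 * M2 * y ^ 2 := by ring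
  · have : |f' (x - t) - f' (x + t)| ≤ M2 * |(x - t) - (x + t)| := hlip _ _
    have ht0 : 0 ≤ t := ht.1
    have hty : t ≤ y := ht.2
    rw [Real.norm_eq_abs]
    calc |f' (x - t) - f' (x + t)| ≤ M2 * |(x - t) - (x + t)| := this
      _ = M2 * (2 * t) := by rw [show (x - t) - (x + t) = -(2*t) by ring, abs_neg,
            abs_of_nonneg (by linarith)]
      _ ≤ 2 * M2 * y := by nlinarith


private lemma integrableOn_cubic {g : ℝ → ℝ} {A B : ℝ} (hg : Continuous g)
    (h1 : ∀ y : ℝ, 0 ≤ y → y ≤ 1 → |g y| ≤ A * y ^ 2) (h2 : ∀ y : ℝ, |g y| ≤ B) :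
    IntegrableOn (fun y => g y / y ^ 2) (Set.Ioi (0:ℝ)) := by
  have hmeas0 : AEStronglyMeasurable (fun y : ℝ => g y / y ^ 2) volume :=
    (hg.measurable.div (measurable_id.pow_const 2)).aestronglyMeasurable
  have hBnn : 0 ≤ B := (abs_nonneg _).trans (h2 0)
  have piece1 : IntegrableOn (fun y => g y / y ^ 2) (Set.Ioc (0:ℝ) 1) := by
    refine Integrable.mono' (g := fun _ => A)
      (integrableOn_const measure_Ioc_lt_top.ne) hmeas0.restrict ?_
    rw [ae_restrict_iff' measurableSet_Ioc]
    refine Eventually.of_forall fun y hy => ?_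
    have hy0 : 0 < y := hy.1
    have h := h1 y hy0.le hy.2
    rw [Real.norm_eq_abs, abs_div, abs_of_nonneg (by positivity : (0:ℝ) ≤ y ^ 2),
      div_le_iff₀ (by positivity)]
    calc |g y| ≤ A * y ^ 2 := h
      _ = A * y ^ 2 := rfl
  have piece2 : IntegrableOn (fun y => g y / y ^ 2) (Set.Ioi (1:ℝ)) := by
    have hint : IntegrableOn (fun y : ℝ => B * (y ^ 2)⁻¹) (Set.Ioi (1:ℝ)) := by
      have := (integrableOn_Ioi_rpow_of_lt (a := (-2:ℝ)) (by norm_num) one_pos).const_mul B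
      refine IntegrableOn.congr_fun this (fun y hy => ?_) measurableSet_Ioi
      have hy0 : (0:ℝ) < y := lt_trans one_pos hy
      show B * y ^ (-2:ℝ) = B * (y ^ 2)⁻¹
      congr 1
      rw [Real.rpow_neg hy0.le, ← Real.rpow_natCast y 2]
      norm_num
    refine Integrable.mono' hint hmeas0.restrict ?_
    rw [ae_restrict_iff' measurableSet_Ioi]
    refine Eventually.of_forall fun y hy => ?_
    have hy0 : (0:ℝ) < y := lt_trans one_pos hy
    rw [Real.norm_eq_abs, abs_div, abs_of_nonneg (by positivity : (0:ℝ) ≤ y ^ 2),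
      div_eq_mul_inv]
    exact mul_le_mul_of_nonneg_right (h2 y) (by positivity)
  have : Set.Ioi (0:ℝ) = Set.Ioc 0 1 ∪ Set.Ioi 1 := (Set.Ioc_union_Ioi_eq_Ioi zero_le_one).symm
  rw [this]
  exact piece1.union piece2

private lemma trunc_set_eq {ε : ℝ} (hε : 0 < ε) :
    {y : ℝ | ε ≤ |y| ∧ |y| ≤ ε⁻¹} = Set.Icc (-ε⁻¹) (-ε) ∪ Set.Icc ε ε⁻¹ := by
  ext y
  rcases abs_cases y with ⟨h, h0⟩ | ⟨h, h0⟩ <;>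
    simp only [Set.mem_setOf_eq, Set.mem_union, Set.mem_Icc, h] <;> constructor <;> intro hy
  · right; exact ⟨hy.1, hy.2⟩
  · rcases hy with ⟨h1, h2⟩ | ⟨h1, h2⟩
    · constructor <;> linarith
    · exact ⟨h1, h2⟩
  · left; constructor <;> linarith
  · rcases hy with ⟨h1, h2⟩ | ⟨h1, h2⟩
    · constructor <;> linarith
    · constructor <;> linarith

private lemma trunc_formula {f f' : ℝ → ℝ}
    (hf1 : ∀ t, HasDerivAt f (f' t) t) (hc' : Continuous f') (x : ℝ)
    {ε : ℝ} (hε : 0 < ε) (hε1 : ε < 1) :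
    ∫ y in {y : ℝ | ε ≤ |y| ∧ |y| ≤ ε⁻¹}, y⁻¹ • f' (x - y) =
      ε * (2 * f x - f (x - ε⁻¹) - f (x + ε⁻¹)) - ε⁻¹ * (2 * f x - f (x - ε) - f (x + ε))
        + ∫ y in Set.Ioc ε ε⁻¹, (2 * f x - f (x - y) - f (x + y)) / y ^ 2 := by
  have hcf : Continuous f := by
    rw [continuous_iff_continuousAt]; exact fun t => (hf1 t).continuousAt
  have h1inv : (1:ℝ) ≤ ε⁻¹ := (one_le_inv₀ hε).2 hε1.le
  have hεle : ε ≤ ε⁻¹ := le_trans hε1.le h1inv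
  have hεinvpos : (0:ℝ) < ε⁻¹ := inv_pos.2 hε
  set v : ℝ → ℝ := fun y => 2 * f x - f (x - y) - f (x + y) with hvdef
  have hvcont : Continuous v := by
    exact (((continuous_const).sub (hcf.comp (continuous_const.sub continuous_id))).sub
      (hcf.comp (continuous_const.add continuous_id)))
  have hv'cont : Continuous fun y => f' (x - y) - f' (x + y) :=
    ((hc'.comp (continuous_const.sub continuous_id)).sub
      (hc'.comp (continuous_const.add continuous_id)))
  -- integrability of the original integrand on each Icc
  have key_int : ∀ a b : ℝ, (0:ℝ) ∉ Set.Icc a b →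
      IntegrableOn (fun y : ℝ => y⁻¹ • f' (x - y)) (Set.Icc a b) := by
    intro a b h0
    refine ContinuousOn.integrableOn_Icc ?_
    refine ContinuousOn.smul (ContinuousOn.inv₀ continuousOn_id fun y hy hne => ?_)
      ((hc'.comp (continuous_const.sub continuous_id)).continuousOn)
    exact h0 (hne ▸ hy)
  have hne1 : (0:ℝ) ∉ Set.Icc (-ε⁻¹) (-ε) := by
    rintro ⟨-, h2⟩; linarith
  have hne2 : (0:ℝ) ∉ Set.Icc ε ε⁻¹ := by
    rintro ⟨h1, -⟩; linarith
  have hd : Disjoint (Set.Icc (-ε⁻¹) (-ε)) (Set.Icc ε ε⁻¹) := by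
    rw [Set.disjoint_left]; rintro y ⟨-, h2⟩ ⟨h3, -⟩; linarith
  rw [trunc_set_eq hε,
    setIntegral_union hd measurableSet_Icc (key_int _ _ hne1) (key_int _ _ hne2),
    integral_Icc_eq_integral_Ioc, integral_Icc_eq_integral_Ioc,
    ← intervalIntegral.integral_of_le (by linarith : -ε⁻¹ ≤ -ε),
    ← intervalIntegral.integral_of_le hεle,
    ← intervalIntegral.integral_comp_neg (a := ε) (b := ε⁻¹)]
  have h0 : ∀ y ∈ Set.uIcc ε ε⁻¹, y ≠ (0:ℝ) := by
    rw [Set.uIcc_of_le hεle]; intro y hy; exact ne_of_gt (lt_of_lt_of_le hε hy.1)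
  have int_a : IntervalIntegrable (fun y : ℝ => (-y)⁻¹ • f' (x - -y)) volume ε ε⁻¹ := by
    apply ContinuousOn.intervalIntegrable
    exact (ContinuousOn.inv₀ (continuousOn_id.neg) fun y hy => neg_ne_zero.2 (h0 y hy)).smul
      ((hc'.comp (continuous_const.sub continuous_neg)).continuousOn)
  have int_b : IntervalIntegrable (fun y : ℝ => y⁻¹ • f' (x - y)) volume ε ε⁻¹ := by
    apply ContinuousOn.intervalIntegrable
    exact (ContinuousOn.inv₀ continuousOn_id (h0)).smul
      ((hc'.comp (continuous_const.sub continuous_id)).continuousOn)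
  have comb :
      ((∫ y in ε..ε⁻¹, (-y)⁻¹ • f' (x - -y)) + ∫ y in ε..ε⁻¹, y⁻¹ • f' (x - y))
        = ∫ y in ε..ε⁻¹, y⁻¹ * (f' (x - y) - f' (x + y)) := by
    rw [← intervalIntegral.integral_add int_a int_b]
    apply intervalIntegral.integral_congr
    intro y hy
    show (-y)⁻¹ • f' (x - -y) + y⁻¹ • f' (x - y) = y⁻¹ * (f' (x - y) - f' (x + y))
    rw [sub_neg_eq_add]
    simp only [smul_eq_mul, inv_neg]
    ring
  rw [comb]
  -- integration by parts
  have ibp := intervalIntegral.integral_mul_deriv_eq_deriv_mul_of_hasDerivAt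
    (a := ε) (b := ε⁻¹) (u := fun y : ℝ => y⁻¹) (v := v)
    (u' := fun y : ℝ => -(y^2)⁻¹) (v' := fun y => f' (x - y) - f' (x + y))
    (ContinuousOn.inv₀ continuousOn_id h0) hvcont.continuousOn
    (fun y hy => hasDerivAt_inv (by
      rw [min_eq_left hεle, max_eq_right hεle] at hy
      exact ne_of_gt (lt_trans hε hy.1)))
    (fun y _ => sd_deriv hf1 x y)
    (by
      apply ContinuousOn.intervalIntegrable
      exact (ContinuousOn.inv₀ (continuousOn_pow 2) fun y hy => pow_ne_zero 2 (h0 y hy)).neg)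
    (hv'cont.intervalIntegrable ε ε⁻¹)
  rw [ibp]
  simp only [inv_inv]
  have : ∫ y in ε..ε⁻¹, (-(y^2)⁻¹) * v y = - ∫ y in ε..ε⁻¹, v y / y^2 := by
    rw [← intervalIntegral.integral_neg]
    apply intervalIntegral.integral_congr
    intro y _
    show -(y ^ 2)⁻¹ * v y = -(v y / y ^ 2)
    ring
  rw [this, intervalIntegral.integral_of_le hεle]
  simp only [hvdef]
  ring

private lemma pv_tendsto {f f' f'' : ℝ → ℝ} {M0 M2 : ℝ}
    (hf1 : ∀ t, HasDerivAt f (f' t) t) (hf2 : ∀ t, HasDerivAt f' (f'' t) t)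
    (hc' : Continuous f')
    (hM0 : ∀ t, |f t| ≤ M0) (hM2 : ∀ t, |f'' t| ≤ M2) (x : ℝ) :
    Tendsto (fun ε : ℝ => ∫ y in {y : ℝ | ε ≤ |y| ∧ |y| ≤ ε⁻¹}, y⁻¹ • f' (x - y))
      (nhdsWithin 0 (Set.Ioi (0:ℝ)))
      (𝓝 (∫ y in Set.Ioi (0:ℝ), (2 * f x - f (x - y) - f (x + y)) / y ^ 2)) := by
  have hcf : Continuous f := by
    rw [continuous_iff_continuousAt]; exact fun t => (hf1 t).continuousAt
  have hM0nn : 0 ≤ M0 := (abs_nonneg _).trans (hM0 0)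
  have hM2nn : 0 ≤ M2 := (abs_nonneg _).trans (hM2 0)
  set v : ℝ → ℝ := fun y => 2 * f x - f (x - y) - f (x + y) with hvdef
  have hvcont : Continuous v :=
    (((continuous_const).sub (hcf.comp (continuous_const.sub continuous_id))).sub
      (hcf.comp (continuous_const.add continuous_id)))
  have hv4 : ∀ y, |v y| ≤ 4 * M0 := by
    intro y
    have := hM0 x; have := hM0 (x - y); have := hM0 (x + y)
    simp only [hvdef]
    rw [abs_le]; constructor <;> [nlinarith [abs_le.1 (hM0 x), abs_le.1 (hM0 (x-y)), abs_le.1 (hM0 (x+y))];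
      nlinarith [abs_le.1 (hM0 x), abs_le.1 (hM0 (x-y)), abs_le.1 (hM0 (x+y))]]
  have hvq : ∀ y : ℝ, 0 ≤ y → |v y| ≤ 2 * M2 * y ^ 2 := fun y hy => sd_bound hf1 hf2 hM2 x y hy
  have hvint : IntegrableOn (fun y => v y / y ^ 2) (Set.Ioi (0:ℝ)) :=
    integrableOn_cubic hvcont (fun y hy _ => hvq y hy) hv4
  have hmeas : Measurable fun y : ℝ => v y / y ^ 2 :=
    hvcont.measurable.div (measurable_id.pow_const 2)
  have T1 : Tendsto (fun ε : ℝ => ε * v ε⁻¹) (nhdsWithin 0 (Set.Ioi (0:ℝ))) (𝓝 0) := by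
    refine squeeze_zero_norm' (a := fun ε : ℝ => 4 * M0 * ε) ?_ ?_
    · filter_upwards [self_mem_nhdsWithin] with ε (hε : ε ∈ Set.Ioi (0:ℝ))
      rw [Real.norm_eq_abs, abs_mul, abs_of_nonneg (le_of_lt hε)]
      calc ε * |v ε⁻¹| ≤ ε * (4 * M0) := by
            exact mul_le_mul_of_nonneg_left (hv4 _) (le_of_lt hε)
        _ = 4 * M0 * ε := by ring
    · have : Tendsto (fun ε : ℝ => 4 * M0 * ε) (𝓝 0) (𝓝 (4 * M0 * 0)) :=
        (tendsto_id.const_mul _)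
      rw [mul_zero] at this
      exact this.mono_left nhdsWithin_le_nhds
  have T2 : Tendsto (fun ε : ℝ => ε⁻¹ * v ε) (nhdsWithin 0 (Set.Ioi (0:ℝ))) (𝓝 0) := by
    refine squeeze_zero_norm' (a := fun ε : ℝ => 2 * M2 * ε) ?_ ?_
    · filter_upwards [self_mem_nhdsWithin] with ε (hε : ε ∈ Set.Ioi (0:ℝ))
      have hε0 : (0:ℝ) < ε := hε
      rw [Real.norm_eq_abs, abs_mul, abs_of_nonneg (inv_nonneg.2 hε0.le)]
      calc ε⁻¹ * |v ε| ≤ ε⁻¹ * (2 * M2 * ε ^ 2) :=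
            mul_le_mul_of_nonneg_left (hvq ε hε0.le) (inv_nonneg.2 hε0.le)
        _ = 2 * M2 * ε := by field_simp
    · have : Tendsto (fun ε : ℝ => 2 * M2 * ε) (𝓝 0) (𝓝 (2 * M2 * 0)) :=
        (tendsto_id.const_mul _)
      rw [mul_zero] at this
      exact this.mono_left nhdsWithin_le_nhds
  have T3 : Tendsto (fun ε : ℝ => ∫ y in Set.Ioc ε ε⁻¹, v y / y ^ 2)
      (nhdsWithin 0 (Set.Ioi (0:ℝ))) (𝓝 (∫ y in Set.Ioi (0:ℝ), v y / y ^ 2)) := by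
    have key : Tendsto (fun ε : ℝ => ∫ y in Set.Ioi (0:ℝ),
        Set.indicator (Set.Ioc ε ε⁻¹) (fun y => v y / y ^ 2) y)
        (nhdsWithin 0 (Set.Ioi (0:ℝ))) (𝓝 (∫ y in Set.Ioi (0:ℝ), v y / y ^ 2)) := by
      apply MeasureTheory.tendsto_integral_filter_of_dominated_convergence (fun y => |v y / y ^ 2|)
      · exact Eventually.of_forall fun ε =>
          ((hmeas.indicator measurableSet_Ioc).aestronglyMeasurable).restrict
      · refine Eventually.of_forall fun ε => ae_of_all _ fun y => ?_
        rw [Real.norm_eq_abs, ← Real.norm_eq_abs (v y / y ^ 2)]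
        exact norm_indicator_le_norm_self (f := fun y => v y / y ^ 2) (a := y)
      · exact hvint.norm
      · rw [ae_restrict_iff' measurableSet_Ioi]
        refine ae_of_all _ fun y hy => ?_
        have hy0 : (0:ℝ) < y := hy
        have hmin : (0:ℝ) < min y y⁻¹ := lt_min hy0 (inv_pos.2 hy0)
        have hev : ∀ᶠ ε in nhdsWithin 0 (Set.Ioi (0:ℝ)),
            Set.indicator (Set.Ioc ε ε⁻¹) (fun y => v y / y ^ 2) y = v y / y ^ 2 := by
          filter_upwards [Ioo_mem_nhdsGT_of_mem
            (Set.left_mem_Ico.2 hmin)] with ε hε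
          have hε0 : (0:ℝ) < ε := hε.1
          have h1 : ε < y := lt_of_lt_of_le hε.2 (min_le_left _ _)
          have h2 : ε < y⁻¹ := lt_of_lt_of_le hε.2 (min_le_right _ _)
          have h3 : y < ε⁻¹ := by
            have := mul_inv_cancel₀ (ne_of_gt hy0)
            have := mul_inv_cancel₀ (ne_of_gt hε0)
            nlinarith
          exact Set.indicator_of_mem (Set.mem_Ioc.mpr ⟨h1, h3.le⟩) _
        exact tendsto_const_nhds.congr' (hev.mono fun ε h => h.symm)
    apply key.congr'
    filter_upwards [self_mem_nhdsWithin] with ε (hε : ε ∈ Set.Ioi (0:ℝ))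
    have hsub : Set.Ioi (0:ℝ) ∩ Set.Ioc ε ε⁻¹ = Set.Ioc ε ε⁻¹ :=
      Set.inter_eq_self_of_subset_right (fun y hy => lt_trans hε hy.1)
    rw [setIntegral_indicator measurableSet_Ioc, hsub]
  have tot := (T1.sub T2).add T3
  rw [sub_zero, zero_add] at tot
  apply tot.congr'
  filter_upwards [Ioo_mem_nhdsGT_of_mem (Set.left_mem_Ico.2 one_pos)] with ε hε
  exact (trunc_formula hf1 hc' x hε.1 hε.2).symm

private lemma absDeriv_eq {f f' f'' : ℝ → ℝ} {M0 M2 : ℝ}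
    (hf1 : ∀ t, HasDerivAt f (f' t) t) (hf2 : ∀ t, HasDerivAt f' (f'' t) t)
    (hc' : Continuous f')
    (hM0 : ∀ t, |f t| ≤ M0) (hM2 : ∀ t, |f'' t| ≤ M2) (x : ℝ) :
    absDeriv f x = (Real.pi)⁻¹ * ∫ y in Set.Ioi (0:ℝ),
      (2 * f x - f (x - y) - f (x + y)) / y ^ 2 := by
  have hderiv : deriv f = f' := funext fun t => (hf1 t).deriv
  unfold absDeriv hilbertT
  rw [hderiv]
  apply Tendsto.limUnder_eq
  simpa [smul_eq_mul] using (pv_tendsto hf1 hf2 hc' hM0 hM2 x).const_mul (Real.pi)⁻¹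

private lemma abs_mul_bound {a b A B : ℝ} (ha : |a| ≤ A) (hb : |b| ≤ B) : |a * b| ≤ A * B := by
  rw [abs_mul]
  exact mul_le_mul ha hb (abs_nonneg _) ((abs_nonneg _).trans ha)

private lemma integrableOn_sd {f f' f'' : ℝ → ℝ} {M0 M2 : ℝ}
    (hf1 : ∀ t, HasDerivAt f (f' t) t) (hf2 : ∀ t, HasDerivAt f' (f'' t) t)
    (hM0 : ∀ t, |f t| ≤ M0) (hM2 : ∀ t, |f'' t| ≤ M2) (x : ℝ) :
    IntegrableOn (fun y => (2 * f x - f (x - y) - f (x + y)) / y ^ 2) (Set.Ioi (0:ℝ)) := by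
  have hcf : Continuous f := by
    rw [continuous_iff_continuousAt]; exact fun t => (hf1 t).continuousAt
  have hvcont : Continuous fun y => 2 * f x - f (x - y) - f (x + y) :=
    (((continuous_const).sub (hcf.comp (continuous_const.sub continuous_id))).sub
      (hcf.comp (continuous_const.add continuous_id)))
  refine integrableOn_cubic (B := 4 * M0) hvcont
    (fun y hy _ => sd_bound hf1 hf2 hM2 x y hy) (fun y => ?_)
  have h1 := abs_le.1 (hM0 x); have h2 := abs_le.1 (hM0 (x - y)); have h3 := abs_le.1 (hM0 (x + y))
  rw [abs_le]; constructor <;> nlinarith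

private lemma integrableOn_Iic_of_neg {c : ℝ → ℝ}
    (h : IntegrableOn (fun y => c (-y)) (Set.Ioi (0:ℝ))) :
    IntegrableOn c (Set.Iic (0:ℝ)) := by
  have m : MeasurableEmbedding fun x : ℝ => -x := (Homeomorph.neg ℝ).measurableEmbedding
  rw [← Measure.map_neg_eq_self (volume : Measure ℝ)]
  rw [m.integrableOn_map_iff]
  simp_rw [Function.comp_def, neg_preimage, neg_Iic, neg_zero]
  exact (integrableOn_Ici_iff_integrableOn_Ioi).mpr h

private lemma cubic_pointwise (φ : SchwartzMap ℝ ℝ) (z : ℝ) :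
    ∫ ζ : ℝ, (φ z - φ (z + ζ)) ^ 3 / ζ ^ 2 =
      6 * Real.pi * ((1 / 2) * (φ z ^ 2 * absDeriv (⇑φ) z -
        φ z * absDeriv (fun t => φ t ^ 2) z +
        (1 / 3) * absDeriv (fun t => φ t ^ 3) z)) := by
  classical
  set dφ : ℝ → ℝ := ⇑(SchwartzMap.derivCLM ℝ ℝ φ) with hdφdef
  set d2φ : ℝ → ℝ := ⇑(SchwartzMap.derivCLM ℝ ℝ (SchwartzMap.derivCLM ℝ ℝ φ)) with hd2φdef
  have hdφ_eq : deriv (⇑φ) = dφ := by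
    funext t; rw [hdφdef, SchwartzMap.derivCLM_apply]
  have hd2φ_eq : deriv dφ = d2φ := by
    funext t; rw [hd2φdef, hdφdef, SchwartzMap.derivCLM_apply]
  have hφ1 : ∀ t, HasDerivAt (⇑φ) (dφ t) t := fun t => by
    rw [← hdφ_eq]; exact φ.differentiableAt.hasDerivAt
  have hφ2 : ∀ t, HasDerivAt dφ (d2φ t) t := fun t => by
    rw [← hd2φ_eq]; exact (SchwartzMap.derivCLM ℝ ℝ φ).differentiableAt.hasDerivAt
  have hφc : Continuous (⇑φ) := φ.continuous
  have hdφc : Continuous dφ := (SchwartzMap.derivCLM ℝ ℝ φ).continuous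
  have hd2φc : Continuous d2φ := (SchwartzMap.derivCLM ℝ ℝ (SchwartzMap.derivCLM ℝ ℝ φ)).continuous
  obtain ⟨B0, hB0⟩ : ∃ B0, ∀ t, |φ t| ≤ B0 :=
    ⟨SchwartzMap.seminorm ℝ 0 0 φ, fun t => by
      simpa [Real.norm_eq_abs] using SchwartzMap.norm_le_seminorm ℝ φ t⟩
  obtain ⟨B1, hB1⟩ : ∃ B1, ∀ t, |dφ t| ≤ B1 :=
    ⟨SchwartzMap.seminorm ℝ 0 0 (SchwartzMap.derivCLM ℝ ℝ φ), fun t => by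
      simpa [Real.norm_eq_abs, hdφdef] using
        SchwartzMap.norm_le_seminorm ℝ (SchwartzMap.derivCLM ℝ ℝ φ) t⟩
  obtain ⟨B2, hB2⟩ : ∃ B2, ∀ t, |d2φ t| ≤ B2 :=
    ⟨SchwartzMap.seminorm ℝ 0 0 (SchwartzMap.derivCLM ℝ ℝ (SchwartzMap.derivCLM ℝ ℝ φ)), fun t => by
      simpa [Real.norm_eq_abs, hd2φdef] using
        SchwartzMap.norm_le_seminorm ℝ (SchwartzMap.derivCLM ℝ ℝ (SchwartzMap.derivCLM ℝ ℝ φ)) t⟩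
  have hB0nn : 0 ≤ B0 := (abs_nonneg _).trans (hB0 0)
  have hB1nn : 0 ≤ B1 := (abs_nonneg _).trans (hB1 0)
  have hB2nn : 0 ≤ B2 := (abs_nonneg _).trans (hB2 0)
  -- derivative data for φ^2
  have hmul : ∀ t, HasDerivAt (fun t => φ t * dφ t) (dφ t * dφ t + φ t * d2φ t) t :=
    fun t => (hφ1 t).mul (hφ2 t)
  have hsq : ∀ t, HasDerivAt (fun t => φ t ^ 2) (2 * (φ t * dφ t)) t := by
    intro t
    have h := (hφ1 t).mul (hφ1 t)
    have heq : (⇑φ * ⇑φ) = fun t => φ t ^ 2 := by funext s; rw [Pi.mul_apply]; ring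
    rw [heq] at h
    exact h.congr_deriv (by ring)
  have hsq' : ∀ t, HasDerivAt (fun t => 2 * (φ t * dφ t))
      (2 * (dφ t * dφ t + φ t * d2φ t)) t := fun t => (hmul t).const_mul 2
  -- derivative data for φ^3
  have hcube : ∀ t, HasDerivAt (fun t => φ t ^ 3)
      (dφ t * φ t ^ 2 + φ t * (2 * (φ t * dφ t))) t := by
    intro t
    have h := (hφ1 t).mul (hsq t)
    have heq : (⇑φ * fun t => φ t ^ 2) = fun t => φ t ^ 3 := by funext s; rw [Pi.mul_apply]; ring
    rw [heq] at h
    exact h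
  have hcube' : ∀ t, HasDerivAt (fun t => dφ t * φ t ^ 2 + φ t * (2 * (φ t * dφ t)))
      ((d2φ t * φ t ^ 2 + dφ t * (2 * (φ t * dφ t))) +
        (dφ t * (2 * (φ t * dφ t)) + φ t * (2 * (dφ t * dφ t + φ t * d2φ t)))) t :=
    fun t => ((hφ2 t).mul (hsq t)).add ((hφ1 t).mul (hsq' t))
  -- bounds
  have hb20 : ∀ t, |φ t ^ 2| ≤ B0 ^ 2 := fun t => by
    rw [abs_pow]; exact pow_le_pow_left₀ (abs_nonneg _) (hB0 t) 2
  have hb30 : ∀ t, |φ t ^ 3| ≤ B0 ^ 3 := fun t => by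
    rw [abs_pow]; exact pow_le_pow_left₀ (abs_nonneg _) (hB0 t) 3
  have hb22 : ∀ t, |2 * (dφ t * dφ t + φ t * d2φ t)| ≤ 2 * (B1 * B1 + B0 * B2) := fun t => by
    refine abs_mul_bound (by norm_num) ?_
    exact (abs_add_le _ _).trans (add_le_add (abs_mul_bound (hB1 t) (hB1 t))
      (abs_mul_bound (hB0 t) (hB2 t)))
  have hb32 : ∀ t, |(d2φ t * φ t ^ 2 + dφ t * (2 * (φ t * dφ t))) +
      (dφ t * (2 * (φ t * dφ t)) + φ t * (2 * (dφ t * dφ t + φ t * d2φ t)))| ≤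
      (B2 * B0 ^ 2 + B1 * (2 * (B0 * B1))) + (B1 * (2 * (B0 * B1)) + B0 * (2 * (B1 * B1 + B0 * B2))) := by
    intro t
    have c1 : |2 * (φ t * dφ t)| ≤ 2 * (B0 * B1) :=
      abs_mul_bound (by norm_num) (abs_mul_bound (hB0 t) (hB1 t))
    refine (abs_add_le _ _).trans (add_le_add ?_ ?_)
    · exact (abs_add_le _ _).trans (add_le_add (abs_mul_bound (hB2 t) (hb20 t))
        (abs_mul_bound (hB1 t) c1))
    · exact (abs_add_le _ _).trans (add_le_add (abs_mul_bound (hB1 t) c1)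
        (abs_mul_bound (hB0 t) (hb22 t)))
  -- continuity of first derivatives
  have hc2' : Continuous fun t => 2 * (φ t * dφ t) :=
    continuous_const.mul (hφc.mul hdφc)
  have hc3' : Continuous fun t => dφ t * φ t ^ 2 + φ t * (2 * (φ t * dφ t)) :=
    (hdφc.mul (hφc.pow 2)).add (hφc.mul hc2')
  -- the three absDeriv formulas
  have e1 := absDeriv_eq hφ1 hφ2 hdφc hB0 hB2 z
  have e2 := absDeriv_eq hsq hsq' hc2' hb20 hb22 z
  have e3 := absDeriv_eq hcube hcube' hc3' hb30 hb32 z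
  have e1' : absDeriv (⇑φ) z = (Real.pi)⁻¹ * ∫ y in Set.Ioi (0:ℝ),
      (2 * φ z - φ (z - y) - φ (z + y)) / y ^ 2 := e1
  have e2' : absDeriv (fun t => φ t ^ 2) z = (Real.pi)⁻¹ * ∫ y in Set.Ioi (0:ℝ),
      (2 * φ z ^ 2 - φ (z - y) ^ 2 - φ (z + y) ^ 2) / y ^ 2 := e2
  have e3' : absDeriv (fun t => φ t ^ 3) z = (Real.pi)⁻¹ * ∫ y in Set.Ioi (0:ℝ),
      (2 * φ z ^ 3 - φ (z - y) ^ 3 - φ (z + y) ^ 3) / y ^ 2 := e3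
  -- integrability of the second-difference integrands
  have i1 : IntegrableOn (fun y => (2 * φ z - φ (z - y) - φ (z + y)) / y ^ 2)
      (Set.Ioi (0:ℝ)) := integrableOn_sd hφ1 hφ2 hB0 hB2 z
  have i2 : IntegrableOn (fun y => (2 * φ z ^ 2 - φ (z - y) ^ 2 - φ (z + y) ^ 2) / y ^ 2)
      (Set.Ioi (0:ℝ)) := integrableOn_sd hsq hsq' hb20 hb22 z
  have i3 : IntegrableOn (fun y => (2 * φ z ^ 3 - φ (z - y) ^ 3 - φ (z + y) ^ 3) / y ^ 2)
      (Set.Ioi (0:ℝ)) := integrableOn_sd hcube hcube' hb30 hb32 z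
  -- integrability of the cubic integrand
  have hlip : ∀ s t : ℝ, |φ s - φ t| ≤ B1 * |s - t| := lip_of_deriv hφ1 hB1
  have cube_int : ∀ σ : ℝ, σ = 1 ∨ σ = -1 →
      IntegrableOn (fun y => (φ z - φ (z + σ * y)) ^ 3 / y ^ 2) (Set.Ioi (0:ℝ)) := by
    intro σ hσ
    have hσ1 : |σ| = 1 := by rcases hσ with h | h <;> simp [h]
    refine integrableOn_cubic (A := B1 ^ 3) (B := (2 * B0) ^ 3)
      ((continuous_const.sub (hφc.comp (continuous_const.add
        (continuous_const.mul continuous_id)))).pow 3) (fun y hy hy1 => ?_) (fun y => ?_)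
    · have hl : |φ z - φ (z + σ * y)| ≤ B1 * y := by
        have h := hlip z (z + σ * y)
        rw [show z - (z + σ * y) = -(σ * y) by ring, abs_neg, abs_mul, hσ1, one_mul,
          abs_of_nonneg hy] at h
        exact h
      rw [abs_pow]
      calc |φ z - φ (z + σ * y)| ^ 3 ≤ (B1 * y) ^ 3 :=
            pow_le_pow_left₀ (abs_nonneg _) hl 3
        _ = B1 ^ 3 * (y ^ 2 * y) := by ring
        _ ≤ B1 ^ 3 * (y ^ 2 * 1) := by
            refine mul_le_mul_of_nonneg_left (mul_le_mul_of_nonneg_left hy1 (by positivity)) ?_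
            positivity
        _ = B1 ^ 3 * y ^ 2 := by ring
    · have hl : |φ z - φ (z + σ * y)| ≤ 2 * B0 := by
        have h1 := abs_le.1 (hB0 z); have h2 := abs_le.1 (hB0 (z + σ * y))
        rw [abs_le]; constructor <;> linarith
      rw [abs_pow]
      exact pow_le_pow_left₀ (abs_nonneg _) hl 3
  have cpos : IntegrableOn (fun y => (φ z - φ (z + y)) ^ 3 / y ^ 2) (Set.Ioi (0:ℝ)) := by
    have := cube_int 1 (Or.inl rfl)
    refine IntegrableOn.congr_fun this (fun y _ => by rw [one_mul]) measurableSet_Ioi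
  have cneg : IntegrableOn (fun y => (φ z - φ (z + -y)) ^ 3 / (-y) ^ 2) (Set.Ioi (0:ℝ)) := by
    have := cube_int (-1) (Or.inr rfl)
    refine IntegrableOn.congr_fun this (fun y _ => ?_) measurableSet_Ioi
    rw [show (-1 : ℝ) * y = -y by ring, neg_sq]
  have hIic : IntegrableOn (fun ζ => (φ z - φ (z + ζ)) ^ 3 / ζ ^ 2) (Set.Iic (0:ℝ)) :=
    integrableOn_Iic_of_neg cneg
  -- split the integral
  have hsplit : ∫ ζ : ℝ, (φ z - φ (z + ζ)) ^ 3 / ζ ^ 2 =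
      (∫ y in Set.Ioi (0:ℝ), (φ z - φ (z + -y)) ^ 3 / (-y) ^ 2) +
        ∫ y in Set.Ioi (0:ℝ), (φ z - φ (z + y)) ^ 3 / y ^ 2 := by
    rw [← integral_Iic_add_Ioi hIic cpos]
    congr 1
    have h := integral_comp_neg_Ioi (0:ℝ) (fun ζ => (φ z - φ (z + ζ)) ^ 3 / ζ ^ 2)
    simp only [neg_zero] at h
    exact h.symm
  have hcomb : (∫ y in Set.Ioi (0:ℝ), (φ z - φ (z + -y)) ^ 3 / (-y) ^ 2) +
        (∫ y in Set.Ioi (0:ℝ), (φ z - φ (z + y)) ^ 3 / y ^ 2) =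
      ∫ y in Set.Ioi (0:ℝ),
        (3 * φ z ^ 2 * ((2 * φ z - φ (z - y) - φ (z + y)) / y ^ 2)
          - 3 * φ z * ((2 * φ z ^ 2 - φ (z - y) ^ 2 - φ (z + y) ^ 2) / y ^ 2)
          + (2 * φ z ^ 3 - φ (z - y) ^ 3 - φ (z + y) ^ 3) / y ^ 2) := by
    rw [← integral_add cneg cpos]
    congr 1
    funext y
    rw [show z + -y = z - y by ring]
    ring
  have hlin : ∫ y in Set.Ioi (0:ℝ),
        (3 * φ z ^ 2 * ((2 * φ z - φ (z - y) - φ (z + y)) / y ^ 2)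
          - 3 * φ z * ((2 * φ z ^ 2 - φ (z - y) ^ 2 - φ (z + y) ^ 2) / y ^ 2)
          + (2 * φ z ^ 3 - φ (z - y) ^ 3 - φ (z + y) ^ 3) / y ^ 2) =
      3 * φ z ^ 2 * (∫ y in Set.Ioi (0:ℝ), (2 * φ z - φ (z - y) - φ (z + y)) / y ^ 2)
        - 3 * φ z * (∫ y in Set.Ioi (0:ℝ), (2 * φ z ^ 2 - φ (z - y) ^ 2 - φ (z + y) ^ 2) / y ^ 2)
        + ∫ y in Set.Ioi (0:ℝ), (2 * φ z ^ 3 - φ (z - y) ^ 3 - φ (z + y) ^ 3) / y ^ 2 := by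
    have iA : IntegrableOn
        (fun y => 3 * φ z ^ 2 * ((2 * φ z - φ (z - y) - φ (z + y)) / y ^ 2))
        (Set.Ioi (0:ℝ)) := i1.const_mul _
    have iB : IntegrableOn
        (fun y => 3 * φ z * ((2 * φ z ^ 2 - φ (z - y) ^ 2 - φ (z + y) ^ 2) / y ^ 2))
        (Set.Ioi (0:ℝ)) := i2.const_mul _
    have iAB : IntegrableOn
        (fun y => 3 * φ z ^ 2 * ((2 * φ z - φ (z - y) - φ (z + y)) / y ^ 2)
          - 3 * φ z * ((2 * φ z ^ 2 - φ (z - y) ^ 2 - φ (z + y) ^ 2) / y ^ 2))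
        (Set.Ioi (0:ℝ)) := iA.sub iB
    rw [integral_add iAB i3, integral_sub iA iB, MeasureTheory.integral_const_mul, MeasureTheory.integral_const_mul]
  rw [hsplit, hcomb, hlin, e1', e2', e3']
  have hπ : (Real.pi : ℝ) ≠ 0 := Real.pi_ne_zero
  field_simp
  ring



end Aux

/-- Cubic term identity: for a Schwartz function `φ`,
`(1/6π) ∂ₓ ∫ (φ(x) - φ(x+ζ))³/ζ² dζ = (1/2) ∂ₓ{φ²|∂ₓ|φ - φ|∂ₓ|φ² + (1/3)|∂ₓ|φ³}`. -/
theorem cubic_term_identity (φ : SchwartzMap ℝ ℝ) (x : ℝ) :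
    (6 * Real.pi)⁻¹ *
        deriv (fun z => ∫ ζ : ℝ, (φ z - φ (z + ζ)) ^ 3 / ζ ^ 2) x =
      (1 / 2) * deriv (fun y =>
        φ y ^ 2 * absDeriv (⇑φ) y - φ y * absDeriv (fun z => φ z ^ 2) y +
          (1 / 3) * absDeriv (fun z => φ z ^ 3) y) x := by
  have hfun : (fun z => ∫ ζ : ℝ, (φ z - φ (z + ζ)) ^ 3 / ζ ^ 2)
      = fun z => 6 * Real.pi * ((1 / 2) * (φ z ^ 2 * absDeriv (⇑φ) z -
          φ z * absDeriv (fun t => φ t ^ 2) z + (1 / 3) * absDeriv (fun t => φ t ^ 3) z)) :=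
    funext fun z => cubic_pointwise φ z
  rw [hfun, deriv_const_mul_field, deriv_const_mul_field]
  have h6π : (6 * Real.pi : ℝ) ≠ 0 := by positivity
  rw [inv_mul_cancel_left₀ h6π]
end
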